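/- Let w be a workload fluid model solution with w(0) ≤ d_max, and define τ(t) = inf{s ∈ [0,t] : w(s) + s ≥ t} for t ≥ 0. Then τ is well defined (the infimum is over a nonempty set), nondecreasing and continuous on [0,∞); τ(t) = 0 for all t ∈ [0, w(0)]; and w(τ(t)) + τ(t) = t for all t ≥ w(0). -/

import Mathlib

open MeasureTheory Set Filter Topology
open scoped ENNReal

noncomputable section

namespace OverloadedFIFO

/-- The complement `G(x) = Γ((x, ∞))` of the cumulative distribution function of `Γ`. -/
def Gk (Γ : MeasureTheory.Measure ℝ) (x : ℝ) : ℝ := (Γ (Set.Ioi x)).toReal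

/-- Model data: `K` job classes with arrival rates `lam`, service rates `mu`, and
deadline (patience) distributions `Γ`, in the overloaded regime `ρ > 1`.  Each `Γ k` is a
Borel probability measure on `[0,∞)` (no mass on negatives), with continuous c.d.f.
(no atoms, in particular `Γ k {0} = 0`) and finite mean. -/
structure Data (K : ℕ) where
  lam : Fin K → ℝ
  mu : Fin K → ℝ
  Γ : Fin K → MeasureTheory.Measure ℝ
  lam_pos : ∀ k, 0 < lam k
  mu_pos : ∀ k, 0 < mu k
  Γ_prob : ∀ k, MeasureTheory.IsProbabilityMeasure (Γ k)
  Γ_null_neg : ∀ k, Γ k (Set.Iio 0) = 0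
  Γ_noAtom : ∀ k, ∀ x : ℝ, Γ k {x} = 0
  Γ_finite_mean : ∀ k, MeasureTheory.Integrable id (Γ k)
  rho_gt_one : 1 < ∑ k, lam k / mu k

instance {K : ℕ} (D : Data K) (k : Fin K) : IsProbabilityMeasure (D.Γ k) := D.Γ_prob k

/-- `ρ_k = λ_k / μ_k`. -/
def Data.rho {K : ℕ} (D : Data K) (k : Fin K) : ℝ := D.lam k / D.mu k

/-- `ρ = Σ_k ρ_k`. -/
def Data.rhoTot {K : ℕ} (D : Data K) : ℝ := ∑ k, D.rho k

/-- A workload fluid model solution: a nonnegative function `w` on `[0,∞)` satisfying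
`w(t) = w(0) + Σ_k ρ_k ∫_0^t G_k(w(s)) ds − t` for all `t ≥ 0`. -/
def IsWorkloadSol {K : ℕ} (D : Data K) (w : ℝ → ℝ) : Prop :=
  (∀ t : ℝ, 0 ≤ t → 0 ≤ w t) ∧
  (∀ k : Fin K, ∀ t : ℝ, 0 ≤ t →
    IntervalIntegrable (fun s => Gk (D.Γ k) (w s)) volume 0 t) ∧
  (∀ t : ℝ, 0 ≤ t →
    w t = w 0 + (∑ k, D.rho k * ∫ s in (0:ℝ)..t, Gk (D.Γ k) (w s)) - t)

/-- `w_l = sup {u ≥ 0 : Σ_k ρ_k G_k(u) > 1}`. -/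
def wl {K : ℕ} (D : Data K) : ℝ :=
  sSup {u : ℝ | 0 ≤ u ∧ 1 < ∑ k, D.rho k * Gk (D.Γ k) u}

/-- `w_u = sup {u ≥ 0 : Σ_k ρ_k G_k(u) ≥ 1}`. -/
def wu {K : ℕ} (D : Data K) : ℝ :=
  sSup {u : ℝ | 0 ≤ u ∧ 1 ≤ ∑ k, D.rho k * Gk (D.Γ k) u}

/-- `d_max = max_k sup {x ≥ 0 : G_k(x) > 0} ∈ (0,∞]`, as an extended nonnegative real. -/
def dmax {K : ℕ} (D : Data K) : ℝ≥0∞ :=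
  ⨆ k, sSup (ENNReal.ofReal '' {x : ℝ | 0 ≤ x ∧ 0 < Gk (D.Γ k) x})

/-- `τ(t) = inf {s ∈ [0,t] : w(s) + s ≥ t}`. -/
def tauF (w : ℝ → ℝ) (t : ℝ) : ℝ := sInf {s : ℝ | 0 ≤ s ∧ s ≤ t ∧ t ≤ w s + s}

/-- The nonnegative quadrant `[0,∞)²`. -/
def Q : Set (ℝ × ℝ) := {p | 0 ≤ p.1 ∧ 0 ≤ p.2}

/-- The shift `B_x = {y ∈ [0,∞)² : y − x ∈ B}` of a set `B ⊆ [0,∞)²`. -/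
def shift (B : Set (ℝ × ℝ)) (x : ℝ × ℝ) : Set (ℝ × ℝ) :=
  {y | y ∈ Q ∧ (y.1 - x.1, y.2 - x.2) ∈ B}

/-- Diagonal shift `B_t = B_{(t,t)}`. -/
def shiftd (B : Set (ℝ × ℝ)) (t : ℝ) : Set (ℝ × ℝ) := shift B (t, t)

/-- The set `C = ([0,∞)×{0}) ∪ ({0}×[0,∞))`. -/
def Cset : Set (ℝ × ℝ) := {p | (0 ≤ p.1 ∧ p.2 = 0) ∨ (p.1 = 0 ∧ 0 ≤ p.2)}

/-- The `κ`-enlargement `B^κ = {x ∈ [0,∞)² : inf_{y ∈ B} ‖x−y‖ < κ}` (Euclidean norm). -/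
def enlarge (B : Set (ℝ × ℝ)) (κ : ℝ) : Set (ℝ × ℝ) :=
  {x | x ∈ Q ∧ ∃ y ∈ B, Real.sqrt ((x.1 - y.1) ^ 2 + (x.2 - y.2) ^ 2) < κ}

/-- `w_ϑ = sup {x ≥ 0 : ϑ_+([x,∞)×[0,∞)) > 0}` for a `K`-tuple `ϑ` of measures on `[0,∞)²`. -/
def wMeas {K : ℕ} (ϑ : Fin K → MeasureTheory.Measure (ℝ × ℝ)) : ℝ :=
  sSup {x : ℝ | 0 ≤ x ∧ 0 < ∑ k, ϑ k (Set.Ici x ×ˢ Set.Ici (0:ℝ))}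

/-- Membership in the set `I` of admissible initial measures: each `ϑ k` is a finite Borel
measure on `[0,∞)²`; (I.1) the superposition charges no corner set `C_x`, `x ∈ [0,∞)²`;
(I.2) `w_ϑ < ∞`; (I.3) `max_k G_k(w_ϑ − ε) > 0` for every `ε > 0`. -/
def MemI {K : ℕ} (D : Data K) (ϑ : Fin K → MeasureTheory.Measure (ℝ × ℝ)) : Prop :=
  (∀ k, IsFiniteMeasure (ϑ k)) ∧
  (∀ k, ϑ k Qᶜ = 0) ∧
  (∀ x ∈ Q, (∑ k, ϑ k (shift Cset x)) = 0) ∧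
  BddAbove {x : ℝ | 0 ≤ x ∧ 0 < ∑ k, ϑ k (Set.Ici x ×ˢ Set.Ici (0:ℝ))} ∧
  (∀ ε : ℝ, 0 < ε → ∃ k, 0 < Gk (D.Γ k) (wMeas ϑ - ε))

/-- `δ⁺_w`: the Dirac measure at `w` if `w > 0`, and the zero measure otherwise. -/
def deltaPlus (w : ℝ) : MeasureTheory.Measure ℝ :=
  if 0 < w then MeasureTheory.Measure.dirac w else 0

instance (w : ℝ) : SFinite (deltaPlus w) := by
  unfold deltaPlus; split_ifs <;> infer_instance

/-- `(δ⁺_w × Γ)(B)`, as a real number. -/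
def kern (Γ : MeasureTheory.Measure ℝ) (w : ℝ) (B : Set (ℝ × ℝ)) : ℝ :=
  (((deltaPlus w).prod Γ) B).toReal

/-- A (measure-valued) fluid model solution with initial measure `ϑ`: a family
`ζ(t) = (ζ_1(t),…,ζ_K(t))` of finite Borel measures on `[0,∞)²` with `ζ(0) = ϑ` satisfying
`ζ_k(t)(B) = ϑ_k(B_t) + λ_k ∫_0^t (δ⁺_{w(s)} × Γ_k)(B_{t−s}) ds` for every Borel
`B ⊆ [0,∞)²` and `t ≥ 0`, where `w` is the (unique) workload fluid model solution with
`w(0) = w_ϑ`. -/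
def IsFluidSol {K : ℕ} (D : Data K) (ϑ : Fin K → MeasureTheory.Measure (ℝ × ℝ))
    (ζ : ℝ → Fin K → MeasureTheory.Measure (ℝ × ℝ)) : Prop :=
  ∃ w : ℝ → ℝ, IsWorkloadSol D w ∧ w 0 = wMeas ϑ ∧
    (∀ t : ℝ, 0 ≤ t → ∀ k, IsFiniteMeasure (ζ t k) ∧ ζ t k Qᶜ = 0) ∧
    (∀ k, ζ 0 k = ϑ k) ∧
    (∀ k, ∀ B : Set (ℝ × ℝ), B ⊆ Q → MeasurableSet B → ∀ t : ℝ, 0 ≤ t →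
      IntervalIntegrable (fun s => kern (D.Γ k) (w s) (shiftd B (t - s))) volume 0 t ∧
      ζ t k B = ϑ k (shiftd B t) +
        ENNReal.ofReal (D.lam k * ∫ s in (0:ℝ)..t, kern (D.Γ k) (w s) (shiftd B (t - s))))

/-- The candidate invariant state `θ^w`:
`θ^w_k(B) = λ_k ∫_0^w Γ_k({p ≥ u : (w−u, p−u) ∈ B}) du`. -/
def thetaW {K : ℕ} (D : Data K) (w : ℝ) (k : Fin K) : MeasureTheory.Measure (ℝ × ℝ) :=
  ENNReal.ofReal (D.lam k) •
    MeasureTheory.Measure.map (fun up : ℝ × ℝ => (w - up.1, up.2 - up.1))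
      ((((MeasureTheory.volume.restrict (Set.Ioo (0:ℝ) w))).prod (D.Γ k)).restrict
        {up : ℝ × ℝ | up.1 ≤ up.2})


private lemma Gk_nonneg' (Γ : MeasureTheory.Measure ℝ) (x : ℝ) : 0 ≤ Gk Γ x :=
  ENNReal.toReal_nonneg

private lemma Gk_le_one' (Γ : MeasureTheory.Measure ℝ) [IsProbabilityMeasure Γ] (x : ℝ) :
    Gk Γ x ≤ 1 := by
  have h : Γ (Set.Ioi x) ≤ 1 := prob_le_one
  calc (Γ (Set.Ioi x)).toReal ≤ (1 : ℝ≥0∞).toReal := ENNReal.toReal_mono ENNReal.one_ne_top h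
    _ = 1 := by simp

private lemma Gk_antitone' (Γ : MeasureTheory.Measure ℝ) [IsFiniteMeasure Γ] :
    Antitone (Gk Γ) := fun x y hxy =>
  ENNReal.toReal_mono (measure_ne_top Γ _) (measure_mono (Set.Ioi_subset_Ioi hxy))

/-- Properties of `τ(t) = inf {s ∈ [0,t] : w(s) + s ≥ t}`: the infimum is over
a nonempty set; `τ` is nondecreasing and continuous on `[0,∞)`; `τ(t) = 0` for
`t ∈ [0, w(0)]`; and `w(τ(t)) + τ(t) = t` for all `t ≥ w(0)`. -/
theorem tau_properties {K : ℕ} (D : Data K) (w : ℝ → ℝ)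
    (hw : IsWorkloadSol D w) (h0 : ENNReal.ofReal (w 0) ≤ dmax D) :
    (∀ t : ℝ, 0 ≤ t → {s : ℝ | 0 ≤ s ∧ s ≤ t ∧ t ≤ w s + s}.Nonempty) ∧
    MonotoneOn (tauF w) (Set.Ici (0:ℝ)) ∧
    ContinuousOn (tauF w) (Set.Ici (0:ℝ)) ∧
    (∀ t : ℝ, 0 ≤ t → t ≤ w 0 → tauF w t = 0) ∧
    (∀ t : ℝ, w 0 ≤ t → w (tauF w t) + tauF w t = t) := by
  obtain ⟨hpos, hint, heq⟩ := hw
  set f : ℝ → ℝ := fun s => w s + s with hfdef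
  have hrho : ∀ k, 0 < D.rho k := fun k => div_pos (D.lam_pos k) (D.mu_pos k)
  have hfe : ∀ t : ℝ, 0 ≤ t →
      f t = w 0 + ∑ k, D.rho k * ∫ s in (0:ℝ)..t, Gk (D.Γ k) (w s) := by
    intro t ht
    simp only [hfdef]
    rw [heq t ht]; ring
  have hii : ∀ (k : Fin K) (a b : ℝ), 0 ≤ a → 0 ≤ b →
      IntervalIntegrable (fun s => Gk (D.Γ k) (w s)) volume a b := by
    intro k a b ha hb
    have hm : 0 ≤ max a b := le_max_of_le_left ha
    refine (hint k (max a b) hm).mono_set ?_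
    rw [Set.uIcc_of_le hm]
    intro x hx
    rcases Set.mem_uIcc.1 hx with ⟨h1, h2⟩ | ⟨h1, h2⟩
    · exact ⟨ha.trans h1, h2.trans (le_max_right _ _)⟩
    · exact ⟨hb.trans h1, h2.trans (le_max_left _ _)⟩
  have hsplit : ∀ a b : ℝ, 0 ≤ a → 0 ≤ b →
      f b - f a = ∑ k, D.rho k * ∫ s in a..b, Gk (D.Γ k) (w s) := by
    intro a b ha hb
    rw [hfe a ha, hfe b hb]
    have : ∀ k : Fin K,
        (∫ s in (0:ℝ)..b, Gk (D.Γ k) (w s)) - ∫ s in (0:ℝ)..a, Gk (D.Γ k) (w s)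
          = ∫ s in a..b, Gk (D.Γ k) (w s) := fun k =>
      intervalIntegral.integral_interval_sub_left (hii k 0 b le_rfl hb) (hii k 0 a le_rfl ha)
    calc w 0 + (∑ k, D.rho k * ∫ s in (0:ℝ)..b, Gk (D.Γ k) (w s)) -
          (w 0 + ∑ k, D.rho k * ∫ s in (0:ℝ)..a, Gk (D.Γ k) (w s))
        = ∑ k, (D.rho k * (∫ s in (0:ℝ)..b, Gk (D.Γ k) (w s)) -
            D.rho k * ∫ s in (0:ℝ)..a, Gk (D.Γ k) (w s)) := by
          rw [Finset.sum_sub_distrib]; ring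
      _ = ∑ k, D.rho k * ∫ s in a..b, Gk (D.Γ k) (w s) := by
          refine Finset.sum_congr rfl fun k _ => ?_
          rw [← mul_sub, this k]
  have hInn : ∀ (k : Fin K) (a b : ℝ), a ≤ b →
      0 ≤ ∫ s in a..b, Gk (D.Γ k) (w s) :=
    fun k a b hab => intervalIntegral.integral_nonneg hab fun u _ => Gk_nonneg' _ _
  have hmono_f : MonotoneOn f (Set.Ici (0:ℝ)) := by
    intro a ha b hb hab
    have h := hsplit a b ha hb
    have : 0 ≤ f b - f a := by
      rw [h]
      exact Finset.sum_nonneg fun k _ => mul_nonneg (hrho k).le (hInn k a b hab)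
    linarith
  have hIub : ∀ (k : Fin K) (a b : ℝ), 0 ≤ a → a ≤ b →
      (∫ s in a..b, Gk (D.Γ k) (w s)) ≤ b - a := by
    intro k a b ha hab
    calc (∫ s in a..b, Gk (D.Γ k) (w s)) ≤ ∫ _ in a..b, (1:ℝ) :=
          intervalIntegral.integral_mono_on hab (hii k a b ha (ha.trans hab))
            intervalIntegrable_const (fun x _ => Gk_le_one' _ _)
      _ = b - a := by simp
  have hcont_f : ContinuousOn f (Set.Ici (0:ℝ)) := by
    set C : ℝ := ∑ k, D.rho k with hC
    have hC0 : 0 ≤ C := Finset.sum_nonneg fun k _ => (hrho k).le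
    have key : ∀ a ∈ Set.Ici (0:ℝ), ∀ b ∈ Set.Ici (0:ℝ), a ≤ b →
        dist (f a) (f b) ≤ C * dist a b := by
      intro a ha b hb hab
      have h1 : f a ≤ f b := hmono_f ha hb hab
      have h2 : f b - f a ≤ C * (b - a) := by
        rw [hsplit a b ha hb, hC, Finset.sum_mul]
        exact Finset.sum_le_sum fun k _ =>
          mul_le_mul_of_nonneg_left (hIub k a b ha hab) (hrho k).le
      rw [Real.dist_eq, Real.dist_eq, abs_of_nonpos (by linarith), abs_of_nonpos (by linarith)]
      linarith
    have hlip : LipschitzOnWith C.toNNReal f (Set.Ici (0:ℝ)) := by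
      refine LipschitzOnWith.of_dist_le_mul fun a ha b hb => ?_
      have hcoe : (C.toNNReal : ℝ) = C := Real.coe_toNNReal C hC0
      rw [hcoe]
      rcases le_total a b with h | h
      · exact key a ha b hb h
      · rw [dist_comm (f a), dist_comm a]; exact key b hb a ha h
    exact hlip.continuousOn
  have hcont_w : ContinuousOn w (Set.Ici (0:ℝ)) := by
    refine (hcont_f.sub continuousOn_id).congr fun s _ => ?_
    simp [hfdef]
  -- G vanishes above dmax
  have hG0 : ∀ x : ℝ, dmax D < ENNReal.ofReal x → ∀ k, Gk (D.Γ k) x = 0 := by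
    intro x hx k
    by_contra hne
    have hgx : 0 < Gk (D.Γ k) x := lt_of_le_of_ne (Gk_nonneg' _ _) (Ne.symm hne)
    have hx0 : 0 ≤ x := by
      by_contra h
      push_neg at h
      rw [ENNReal.ofReal_eq_zero.2 h.le] at hx
      exact absurd hx (not_lt.2 zero_le)
    have h1 : ENNReal.ofReal x ≤ sSup (ENNReal.ofReal '' {x : ℝ | 0 ≤ x ∧ 0 < Gk (D.Γ k) x}) :=
      le_sSup (Set.mem_image_of_mem ENNReal.ofReal
        (show x ∈ {x : ℝ | 0 ≤ x ∧ 0 < Gk (D.Γ k) x} from ⟨hx0, hgx⟩))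
    have h2 : sSup (ENNReal.ofReal '' {x : ℝ | 0 ≤ x ∧ 0 < Gk (D.Γ k) x}) ≤ dmax D :=
      le_iSup (fun j => sSup (ENNReal.ofReal '' {x : ℝ | 0 ≤ x ∧ 0 < Gk (D.Γ j) x})) k
    exact absurd hx (not_lt.2 (h1.trans h2))
  have hGd : ∀ x : ℝ, (∀ k, Gk (D.Γ k) x = 0) → dmax D ≤ ENNReal.ofReal x := by
    intro x h
    refine iSup_le fun k => sSup_le ?_
    rintro _ ⟨y, ⟨hy0, hyG⟩, rfl⟩
    refine ENNReal.ofReal_le_ofReal ?_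
    by_contra hlt
    push_neg at hlt
    have hle : Gk (D.Γ k) y ≤ Gk (D.Γ k) x := Gk_antitone' (D.Γ k) hlt.le
    rw [h k] at hle
    exact absurd (lt_of_lt_of_le hyG hle) (lt_irrefl 0)
  -- w stays below dmax
  have hwd : ∀ s : ℝ, 0 ≤ s → ENNReal.ofReal (w s) ≤ dmax D := by
    by_contra h
    push_neg at h
    obtain ⟨a, ha, hda⟩ := h
    have hne : dmax D ≠ ⊤ := ne_top_of_lt hda
    set d : ℝ := (dmax D).toReal with hd
    have hwa : d < w a := by rwa [ENNReal.lt_ofReal_iff_toReal_lt hne] at hda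
    have hw0d : w 0 ≤ d := by rwa [ENNReal.ofReal_le_iff_le_toReal hne] at h0
    set S : Set ℝ := Set.Icc 0 a ∩ w ⁻¹' (Set.Iic d) with hS
    have hScl : IsClosed S :=
      (hcont_w.mono Set.Icc_subset_Ici_self).preimage_isClosed_of_isClosed
        isClosed_Icc isClosed_Iic
    have hSne : S.Nonempty := ⟨0, ⟨le_refl 0, ha⟩, hw0d⟩
    have hSb : BddAbove S := ⟨a, fun x hx => hx.1.2⟩
    have hcS : sSup S ∈ S := hScl.csSup_mem hSne hSb
    set c : ℝ := sSup S with hc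
    obtain ⟨⟨hc0, hca⟩, hcd⟩ := hcS
    have hcd' : w c ≤ d := hcd
    have hcla : c < a := by
      rcases lt_or_eq_of_le hca with h' | h'
      · exact h'
      · exact absurd hwa (by rw [← h']; exact not_lt.2 hcd')
    have hzero : ∀ u ∈ Set.Ioc c a, ∀ k, Gk (D.Γ k) (w u) = 0 := by
      intro u hu k
      have hud : d < w u := by
        by_contra hle
        push_neg at hle
        have : u ∈ S := ⟨⟨hc0.trans hu.1.le, hu.2⟩, hle⟩
        exact absurd (le_csSup hSb this) (not_le.2 hu.1)
      exact hG0 (w u) (by rwa [ENNReal.lt_ofReal_iff_toReal_lt hne]) k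
    have hI0 : ∀ k : Fin K, (∫ s in c..a, Gk (D.Γ k) (w s)) = 0 := by
      intro k
      rw [intervalIntegral.integral_of_le hcla.le,
        MeasureTheory.setIntegral_congr_fun measurableSet_Ioc
          (fun u hu => hzero u hu k : Set.EqOn _ (fun _ => (0:ℝ)) _)]
      simp
    have hfeq : f a - f c = 0 := by
      rw [hsplit c a hc0 (hc0.trans hcla.le)]
      simp [hI0]
    have : w a + a - (w c + c) = 0 := hfeq
    have : w a = w c + c - a := by linarith
    have : w a < d := by
      rw [this]; linarith
    linarith
  -- f is strictly monotone on [0,∞)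
  have hflat : ∀ x y : ℝ, 0 ≤ x → x < y → f x = f y → ∀ k, Gk (D.Γ k) (w x) = 0 := by
    intro x y hx hxy hfxy k
    have hy : 0 ≤ y := hx.trans hxy.le
    have hsum : (∑ k, D.rho k * ∫ s in x..y, Gk (D.Γ k) (w s)) = 0 := by
      have := hsplit x y hx hy
      rw [hfxy] at this
      linarith
    have hterm : D.rho k * (∫ s in x..y, Gk (D.Γ k) (w s)) = 0 :=
      (Finset.sum_eq_zero_iff_of_nonneg fun k _ =>
        mul_nonneg (hrho k).le (hInn k x y hxy.le)).1 hsum k (Finset.mem_univ k)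
    have hI : (∫ s in x..y, Gk (D.Γ k) (w s)) = 0 := by
      rcases mul_eq_zero.1 hterm with h | h
      · exact absurd h (ne_of_gt (hrho k))
      · exact h
    have hwle : ∀ u ∈ Set.Icc x y, w u ≤ w x := by
      intro u hu
      have h1 : f x ≤ f u := hmono_f hx (hx.trans hu.1) hu.1
      have h2 : f u ≤ f y := hmono_f (hx.trans hu.1) hy hu.2
      have hfu : f u = f x := le_antisymm (hfxy ▸ h2) h1
      have : w u + u = w x + x := hfu
      linarith [hu.1]
    have hlb : (y - x) * Gk (D.Γ k) (w x) ≤ ∫ s in x..y, Gk (D.Γ k) (w s) := by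
      have := intervalIntegral.integral_mono_on hxy.le
        (intervalIntegrable_const (c := Gk (D.Γ k) (w x))) (hii k x y hx hy)
        (fun u hu => Gk_antitone' (D.Γ k) (hwle u hu))
      simpa [intervalIntegral.integral_const, smul_eq_mul] using this
    nlinarith [Gk_nonneg' (D.Γ k) (w x)]
  have hstrict : StrictMonoOn f (Set.Ici (0:ℝ)) := by
    intro a ha b hb hab
    refine lt_of_le_of_ne (hmono_f ha hb hab.le) fun hfeq => ?_
    set m : ℝ := (a + b) / 2 with hm
    have ham : a < m := by rw [hm]; linarith
    have hmb : m < b := by rw [hm]; linarith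
    have hm0 : (0:ℝ) ≤ m := (Set.mem_Ici.1 ha).trans ham.le
    have hfm : f m = f b :=
      le_antisymm (hmono_f hm0 hb hmb.le) (hfeq ▸ hmono_f ha hm0 ham.le)
    have hGm : ∀ k, Gk (D.Γ k) (w m) = 0 := hflat m b hm0 hmb hfm
    have hdm : dmax D ≤ ENNReal.ofReal (w m) := hGd (w m) hGm
    have hwam : ENNReal.ofReal (w a) ≤ ENNReal.ofReal (w m) := (hwd a ha).trans hdm
    have hwm : w m < w a := by
      have h1 : w m + m = w a + a := by
        have : f m = f a := hfm.trans hfeq.symm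
        exact this
      linarith
    have := (ENNReal.ofReal_le_ofReal_iff (hpos m hm0)).1 hwam
    linarith
  -- the sets S t
  set S : ℝ → Set ℝ := fun t => {s : ℝ | 0 ≤ s ∧ s ≤ t ∧ t ≤ w s + s} with hSdef
  have hSne : ∀ t : ℝ, 0 ≤ t → (S t).Nonempty := fun t ht =>
    ⟨t, ht, le_refl t, le_add_of_nonneg_left (hpos t ht)⟩
  have hSbb : ∀ t : ℝ, BddBelow (S t) := fun t => ⟨0, fun s hs => hs.1⟩
  have hSclosed : ∀ t : ℝ, IsClosed (S t) := by
    intro t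
    have h1 : S t = Set.Icc 0 t ∩ f ⁻¹' (Set.Ici t) := by
      ext s
      simp only [hSdef, Set.mem_setOf_eq, Set.mem_inter_iff, Set.mem_Icc, Set.mem_preimage,
        Set.mem_Ici, hfdef]
      tauto
    rw [h1]
    exact (hcont_f.mono fun s hs => hs.1).preimage_isClosed_of_isClosed isClosed_Icc isClosed_Ici
  have htauinf : ∀ t : ℝ, tauF w t = sInf (S t) := fun t => rfl
  have hmem : ∀ t : ℝ, 0 ≤ t → tauF w t ∈ S t := by
    intro t ht
    rw [htauinf]
    exact (hSclosed t).csInf_mem (hSne t ht) (hSbb t)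
  have htau0 : ∀ t : ℝ, 0 ≤ t → 0 ≤ tauF w t := fun t ht => (hmem t ht).1
  have hmonoτ : MonotoneOn (tauF w) (Set.Ici (0:ℝ)) := by
    intro t ht t' ht' htt'
    have h1 := hmem t' ht'
    have hminS : min (tauF w t') t ∈ S t := by
      rcases le_total (tauF w t') t with hc | hc
      · rw [min_eq_left hc]
        exact ⟨h1.1, hc, le_trans htt' h1.2.2⟩
      · rw [min_eq_right hc]
        exact ⟨ht, le_refl t, le_add_of_nonneg_left (hpos t ht)⟩
    calc tauF w t ≤ min (tauF w t') t := csInf_le (hSbb t) hminS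
      _ ≤ tauF w t' := min_le_left _ _
  have hw00 : (0:ℝ) ≤ w 0 := hpos 0 le_rfl
  have hpart4 : ∀ t : ℝ, 0 ≤ t → t ≤ w 0 → tauF w t = 0 := by
    intro t ht htw
    have h0mem : (0:ℝ) ∈ S t := ⟨le_refl 0, ht, by simpa using htw⟩
    exact le_antisymm (csInf_le (hSbb t) h0mem) (htau0 t ht)
  have hpart5 : ∀ t : ℝ, w 0 ≤ t → w (tauF w t) + tauF w t = t := by
    intro t ht
    have ht0 : 0 ≤ t := hw00.trans ht
    obtain ⟨hr0, hrt, hrw⟩ := hmem t ht0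
    refine le_antisymm ?_ hrw
    rcases eq_or_lt_of_le hr0 with h | h
    · rw [← h]; simpa using ht
    · by_contra hgt
      push_neg at hgt
      have hca : ContinuousAt f (tauF w t) :=
        (hcont_f (tauF w t) h.le).continuousAt (Ici_mem_nhds h)
      have hev : ∀ᶠ s in 𝓝 (tauF w t), t < f s :=
        hca.tendsto.eventually_const_lt (show t < f (tauF w t) from hgt)
      have hev2 : ∀ᶠ s in 𝓝 (tauF w t), 0 < s := eventually_gt_nhds h
      have hev3 : ∀ᶠ s in 𝓝[<] (tauF w t), (t < f s ∧ 0 < s) ∧ s < tauF w t :=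
        ((hev.and hev2).filter_mono nhdsWithin_le_nhds).and self_mem_nhdsWithin
      obtain ⟨s, ⟨hfs, hs0⟩, hsr⟩ := hev3.exists
      have hsS : s ∈ S t := ⟨hs0.le, hsr.le.trans hrt, hfs.le⟩
      have : tauF w t ≤ s := csInf_le (hSbb t) hsS
      linarith
  have hsurj : ∀ v : ℝ, 0 ≤ v → ∃ t, 0 ≤ t ∧ tauF w t = v := by
    intro v hv
    have hf0 : f 0 = w 0 := by simp [hfdef]
    have hmle : f 0 ≤ f v := hmono_f Set.self_mem_Ici hv hv
    have hwfv : w 0 ≤ f v := hf0 ▸ hmle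
    have hfv0 : 0 ≤ f v := hw00.trans hwfv
    refine ⟨f v, hfv0, ?_⟩
    have h5 := hpart5 (f v) hwfv
    have : f (tauF w (f v)) = f v := h5
    exact hstrict.injOn (htau0 _ hfv0) hv this
  have hcontτ : ContinuousOn (tauF w) (Set.Ici (0:ℝ)) := by
    intro a ha
    have ha0 : (0:ℝ) ≤ a := ha
    have hright : ContinuousWithinAt (tauF w) (Set.Ici a) a := by
      refine continuousWithinAt_right_of_monotoneOn_of_exists_between hmonoτ ?_ ?_
      · exact Filter.mem_of_superset self_mem_nhdsWithin (Set.Ici_subset_Ici.2 ha0)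
      · intro b hb
        have hvpos : 0 ≤ (tauF w a + b) / 2 := by
          have := htau0 a ha0
          linarith
        obtain ⟨c, hc0, hc⟩ := hsurj ((tauF w a + b) / 2) hvpos
        exact ⟨c, hc0, by rw [hc]; constructor <;> [linarith; linarith]⟩
    have hleft : ContinuousWithinAt (tauF w) (Set.Iic a ∩ Set.Ici 0) a := by
      rcases eq_or_lt_of_le (htau0 a ha0) with hz | hz
      · refine (continuousWithinAt_const (b := (0:ℝ))).congr ?_ hz.symm
        intro y hy
        have h1 : tauF w y ≤ tauF w a := hmonoτ hy.2 ha hy.1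
        have h2 : 0 ≤ tauF w y := htau0 y hy.2
        rw [← hz] at h1
        exact le_antisymm h1 h2
      · have ha' : 0 < a := lt_of_lt_of_le hz (hmem a ha0).2.1
        have : ContinuousWithinAt (tauF w) (Set.Iic a) a := by
          refine continuousWithinAt_left_of_monotoneOn_of_exists_between hmonoτ ?_ ?_
          · exact mem_nhdsWithin_of_mem_nhds (Ici_mem_nhds ha')
          · intro b hb
            have hmlt : max b 0 < tauF w a := max_lt hb hz
            have hvpos : 0 ≤ (max b 0 + tauF w a) / 2 := by
              have : (0:ℝ) ≤ max b 0 := le_max_right _ _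
              linarith [htau0 a ha0]
            obtain ⟨c, hc0, hc⟩ := hsurj ((max b 0 + tauF w a) / 2) hvpos
            refine ⟨c, hc0, ?_⟩
            rw [hc]
            constructor
            · have hble : b ≤ max b 0 := le_max_left _ _
              linarith
            · linarith
        exact this.mono Set.inter_subset_left
    have hsub : Set.Ici (0:ℝ) ⊆ (Set.Iic a ∩ Set.Ici 0) ∪ Set.Ici a := by
      intro x hx
      rcases le_total x a with h | h
      · exact Or.inl ⟨h, hx⟩
      · exact Or.inr h
    exact (hleft.union hright).mono hsub
  exact ⟨hSne, hmonoτ, hcontτ, hpart4, hpart5⟩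

end OverloadedFIFO
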